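/- Let X ∈ ℝ^{n×p} have full column rank, let R be an r×n matrix of i.i.d. standard Gaussian entries, and fix a vector e ∈ ℝ^n. Conditioned on X and M = RX (with M of full column rank), the conditional distribution of the first-stage estimator β̃ = β + M⁺Re (where y = Xβ + e) is N(β + X⁺e, ‖P_{U⊥}e‖²·(MᵀM)⁻¹), where P_{U⊥} = I − XX⁺ is the projection onto the orthogonal complement of the column span of X. -/

import Mathlib

open Matrix MeasureTheory ProbabilityTheory
open scoped ENNReal NNReal Real
open scoped MatrixOrder

theorem aux_lintegral_pi_prod {n : ℕ} (μ : Fin n → Measure ℝ) [∀ i, SigmaFinite (μ i)]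
    (f : Fin n → ℝ → ℝ≥0∞) (hf : ∀ i, Measurable (f i)) :
    ∫⁻ x : Fin n → ℝ, ∏ i, f i (x i) ∂Measure.pi μ = ∏ i, ∫⁻ t, f i t ∂μ i := by
  induction n with
  | zero => simp [lintegral_const, Measure.pi_univ]
  | succ m ih =>
      have h := (measurePreserving_piFinSuccAbove μ 0).symm
      have hF : Measurable (fun x : Fin (m+1) → ℝ => ∏ i, f i (x i)) :=
        Finset.measurable_prod _ (fun i _ => (hf i).comp (measurable_pi_apply i))
      rw [← h.lintegral_comp hF]
      simp only [MeasurableEquiv.piFinSuccAbove_symm_apply, Fin.insertNthEquiv,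
        Fin.prod_univ_succ, Fin.insertNth_zero, Equiv.coe_fn_mk, Fin.zero_succAbove,
        Function.comp_def, Fin.cons_zero, Fin.cons_succ, cast_eq]
      rw [lintegral_prod_mul (μ := μ 0) (ν := Measure.pi fun j : Fin m => μ j.succ)
        (f := f 0) (g := fun y => ∏ x : Fin m, f x.succ (y x)) (hf 0).aemeasurable
        (Finset.measurable_prod _ (fun i _ => (hf _).comp (measurable_pi_apply i))).aemeasurable,
        ih (fun j => μ j.succ) (fun j => f j.succ) (fun j => hf _)]

theorem aux_gaussianPi_eq (N : ℕ) :
    (Measure.pi fun _ : Fin N => gaussianReal 0 1) =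
      (volume : Measure (Fin N → ℝ)).withDensity
        (fun x => ∏ i, gaussianPDF 0 1 (x i)) := by
  refine Measure.pi_eq fun s hs => ?_
  rw [withDensity_apply _ (MeasurableSet.univ_pi hs),
    ← lintegral_indicator (MeasurableSet.univ_pi hs)]
  have hind : (Set.univ.pi s).indicator (fun x : Fin N → ℝ => ∏ i, gaussianPDF 0 1 (x i))
      = fun x => ∏ i, (s i).indicator (gaussianPDF 0 1) (x i) := by
    funext x
    by_cases hx : x ∈ Set.univ.pi s
    · rw [Set.indicator_of_mem hx]
      exact Finset.prod_congr rfl fun i _ =>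
        (Set.indicator_of_mem (hx i trivial) _).symm
    · rw [Set.indicator_of_notMem hx]
      rw [Set.mem_univ_pi] at hx; push_neg at hx
      obtain ⟨i, hi⟩ := hx
      exact (Finset.prod_eq_zero (Finset.mem_univ i) (Set.indicator_of_notMem hi _)).symm
  rw [hind, volume_pi,
    aux_lintegral_pi_prod _ _ (fun i => (measurable_gaussianPDF 0 1).indicator (hs i))]
  refine Finset.prod_congr rfl fun i _ => ?_
  rw [lintegral_indicator (hs i), gaussianReal_apply 0 one_ne_zero (s i)]

theorem aux_pdf_prod {N : ℕ} (x : Fin N → ℝ) :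
    ∏ i, gaussianPDF 0 1 (x i)
      = ENNReal.ofReal ((Real.sqrt (2 * π))⁻¹ ^ N * Real.exp (-(∑ i, x i ^ 2) / 2)) := by
  have h1 : ∀ t : ℝ, gaussianPDF 0 1 t
      = ENNReal.ofReal ((Real.sqrt (2 * π))⁻¹ * Real.exp (-(t ^ 2) / 2)) := by
    intro t
    simp [gaussianPDF, gaussianPDFReal]
  simp_rw [h1]
  rw [← ENNReal.ofReal_prod_of_nonneg]
  · congr 1
    rw [Finset.prod_mul_distrib, Finset.prod_const, ← Real.exp_sum]
    congr 1
    · simp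
    · rw [← Finset.sum_div, ← Finset.sum_neg_distrib]
  · intro i _
    positivity

theorem aux_measurable_mulVec {a b : ℕ} (A : Matrix (Fin a) (Fin b) ℝ) :
    Measurable (A.mulVec) := by
  apply measurable_pi_lambda
  intro i
  have : (fun x : Fin b → ℝ => A.mulVec x i) = fun x => ∑ j, A i j * x j := by
    funext x; rfl
  rw [this]
  exact Finset.measurable_sum _ fun j _ => (measurable_pi_apply j).const_mul _

theorem aux_sq_sum_mulVec {N : ℕ} (O : Matrix (Fin N) (Fin N) ℝ) (hOt : Oᵀ * O = 1)
    (x : Fin N → ℝ) : ∑ i, (O.mulVec x) i ^ 2 = ∑ i, x i ^ 2 := by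
  have h1 : ∀ y : Fin N → ℝ, ∑ i, y i ^ 2 = y ⬝ᵥ y := by
    intro y; simp [dotProduct, pow_two]
  rw [h1, h1, dotProduct_mulVec, ← mulVec_transpose, mulVec_mulVec, hOt, one_mulVec]

theorem aux_volume_preserving_mulVec {N : ℕ} (O : Matrix (Fin N) (Fin N) ℝ)
    (hO : O * Oᵀ = 1) :
    MeasurePreserving O.mulVec (volume : Measure (Fin N → ℝ)) volume := by
  refine ⟨aux_measurable_mulVec O, ?_⟩
  have hdet : O.det * O.det = 1 := by
    have := congrArg Matrix.det hO
    rwa [det_mul, det_transpose, det_one] at this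
  have habs : |O.det| = 1 := by
    rcases mul_self_eq_one_iff.mp hdet with h | h <;> simp [h]
  have hne : LinearMap.det (Matrix.toLin' O) ≠ 0 := by
    rw [LinearMap.det_toLin']
    intro h; rw [h] at habs; simp at habs
  have hmap := Real.map_linearMap_volume_pi_eq_smul_volume_pi hne
  have hcoe : ⇑(Matrix.toLin' O) = O.mulVec := by
    funext x; exact Matrix.toLin'_apply O x
  rw [hcoe] at hmap
  rw [hmap, LinearMap.det_toLin', abs_inv, habs]
  simp

theorem aux_rotation_invariance {N : ℕ} (O : Matrix (Fin N) (Fin N) ℝ) (hO : O * Oᵀ = 1) :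
    Measure.map O.mulVec (Measure.pi fun _ : Fin N => gaussianReal 0 1)
      = Measure.pi fun _ : Fin N => gaussianReal 0 1 := by
  have hOt : Oᵀ * O = 1 := mul_eq_one_comm.mp hO
  have hT := aux_measurable_mulVec O
  have hF : Measurable (fun x : Fin N → ℝ => ∏ i, gaussianPDF 0 1 (x i)) :=
    Finset.measurable_prod _ fun i _ => (measurable_gaussianPDF 0 1).comp (measurable_pi_apply i)
  have hFO : ∀ x, (∏ i, gaussianPDF 0 1 ((O.mulVec x) i)) = ∏ i, gaussianPDF 0 1 (x i) := by
    intro x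
    rw [aux_pdf_prod, aux_pdf_prod, aux_sq_sum_mulVec O hOt]
  rw [aux_gaussianPi_eq]
  ext s hs
  rw [Measure.map_apply hT hs, withDensity_apply _ (hT hs), withDensity_apply _ hs,
    ← lintegral_indicator (hT hs), ← lintegral_indicator hs]
  have hind : ∀ x, (O.mulVec ⁻¹' s).indicator (fun x => ∏ i, gaussianPDF 0 1 (x i)) x
      = s.indicator (fun x => ∏ i, gaussianPDF 0 1 (x i)) (O.mulVec x) := by
    intro x
    by_cases hx : O.mulVec x ∈ s
    · rw [Set.indicator_of_mem hx, Set.indicator_of_mem (by exact hx), hFO]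
    · rw [Set.indicator_of_notMem hx, Set.indicator_of_notMem (by exact hx)]
  simp_rw [hind]
  exact (aux_volume_preserving_mulVec O hO).lintegral_comp (hF.indicator hs)

theorem aux_projection {N q : ℕ} (hq : q ≤ N) :
    Measure.map (fun (x : Fin N → ℝ) (i : Fin q) => x (Fin.castLE hq i))
      (Measure.pi fun _ : Fin N => gaussianReal 0 1)
      = Measure.pi fun _ : Fin q => gaussianReal 0 1 := by
  refine (Measure.pi_eq fun s hs => ?_).symm
  have hmeas : Measurable (fun (x : Fin N → ℝ) (i : Fin q) => x (Fin.castLE hq i)) :=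
    measurable_pi_lambda _ fun i => measurable_pi_apply _
  rw [Measure.map_apply hmeas (MeasurableSet.univ_pi hs)]
  classical
  set t : Fin N → Set ℝ := fun j => if h : (j : ℕ) < q then s ⟨j, h⟩ else Set.univ with ht
  have hpre : (fun (x : Fin N → ℝ) (i : Fin q) => x (Fin.castLE hq i)) ⁻¹' (Set.univ.pi s)
      = Set.univ.pi t := by
    ext x
    simp only [Set.mem_preimage, Set.mem_univ_pi]
    constructor
    · intro h j
      by_cases hj : (j : ℕ) < q
      · have := h ⟨j, hj⟩
        simpa [t, hj, Fin.castLE] using this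
      · simp [t, hj]
    · intro h i
      have := h (Fin.castLE hq i)
      simpa [t, Fin.castLE, i.isLt] using this
  rw [hpre, Measure.pi_pi]
  have hout : ∀ j ∈ Finset.univ, j ∉ Finset.univ.filter (fun j : Fin N => (j : ℕ) < q) →
      gaussianReal 0 1 (t j) = 1 := by
    intro j _ hj
    simp only [Finset.mem_filter, Finset.mem_univ, true_and] at hj
    simp [t, hj]
  rw [← Finset.prod_subset (Finset.subset_univ _) hout]
  refine (Finset.prod_bij (fun (i : Fin q) _ => Fin.castLE hq i) ?_ ?_ ?_ ?_).symm
  · intro i _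
    simp [Fin.castLE, i.isLt]
  · intro i _ j _ hij
    exact Fin.castLE_injective hq hij
  · intro j hj
    simp only [Finset.mem_filter, Finset.mem_univ, true_and] at hj
    exact ⟨⟨j, hj⟩, Finset.mem_univ _, by simp [Fin.castLE]⟩
  · intro i _
    simp [t, Fin.castLE, i.isLt]

theorem aux_orthonormal_rows {N q : ℕ} (hq : q ≤ N) (Q : Matrix (Fin q) (Fin N) ℝ)
    (hQ : Q * Qᵀ = 1) :
    Measure.map Q.mulVec (Measure.pi fun _ : Fin N => gaussianReal 0 1)
      = Measure.pi fun _ : Fin q => gaussianReal 0 1 := by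
  classical
  set v : Fin N → EuclideanSpace ℝ (Fin N) := fun j =>
    if h : (j : ℕ) < q then WithLp.toLp 2 (fun k => Q ⟨j, h⟩ k) else 0 with hv
  set s : Set (Fin N) := {j | (j : ℕ) < q} with hs
  have hQentry : ∀ i1 i2 : Fin q, ∑ k, Q i1 k * Q i2 k = if i1 = i2 then 1 else 0 := by
    intro i1 i2
    have := congrFun (congrFun hQ i1) i2
    simpa [mul_apply, one_apply] using this
  have hon : Orthonormal ℝ (s.restrict v) := by
    rw [orthonormal_iff_ite]
    rintro ⟨i, hi⟩ ⟨j, hj⟩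
    have hi' : (i : ℕ) < q := hi
    have hj' : (j : ℕ) < q := hj
    rw [PiLp.inner_apply]
    simp only [Set.restrict_apply, v, dif_pos hi', dif_pos hj', RCLike.inner_apply,
      starRingEnd_apply, star_trivial, PiLp.toLp_apply]
    simp only [Set.restrict, Set.domRestrict_apply, dif_pos hi', dif_pos hj', PiLp.toLp_apply]
    conv_lhs => arg 2; ext k; rw [mul_comm]
    rw [hQentry]
    congr 1
    simp only [eq_iff_iff]
    constructor
    · intro h
      have hval := congrArg Fin.val h
      exact Subtype.ext (Fin.ext hval)
    · intro h
      have hval := congrArg Fin.val (congrArg Subtype.val h)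
      exact Fin.ext hval
  obtain ⟨b, hb⟩ := hon.exists_orthonormalBasis_extension_of_card_eq
    (by simp [finrank_euclideanSpace_fin])
  set O : Matrix (Fin N) (Fin N) ℝ := Matrix.of (fun i k => (b i : EuclideanSpace ℝ (Fin N)) k)
    with hO'
  have hO : O * Oᵀ = 1 := by
    ext i j
    rw [mul_apply, one_apply]
    have honb := b.orthonormal
    rw [orthonormal_iff_ite] at honb
    have h2 := honb i j
    rw [PiLp.inner_apply] at h2
    simpa [O, starRingEnd_apply, star_trivial, transpose_apply, mul_comm] using h2
  have hrow : ∀ (x : Fin N → ℝ) (i : Fin q),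
      (Q.mulVec x) i = (O.mulVec x) (Fin.castLE hq i) := by
    intro x i
    have hmem : (Fin.castLE hq i : Fin N) ∈ s := i.isLt
    have hbi := hb _ hmem
    simp only [mulVec, dotProduct, O, Matrix.of_apply]
    refine Finset.sum_congr rfl fun k _ => ?_
    congr 1
    rw [hbi]
    simp [v, Fin.castLE, i.isLt]
  have hcomp : Q.mulVec = (fun (x : Fin N → ℝ) (i : Fin q) => x (Fin.castLE hq i)) ∘ O.mulVec :=
    funext fun x => funext fun i => hrow x i
  rw [hcomp, ← Measure.map_map (measurable_pi_lambda _ fun i => measurable_pi_apply _)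
    (aux_measurable_mulVec O), aux_rotation_invariance O hO, aux_projection hq]

theorem aux_matrix_gaussian {N q : ℕ} (hq : q ≤ N) (C : Matrix (Fin q) (Fin N) ℝ)
    {S : Matrix (Fin q) (Fin q) ℝ} (hCS : C * Cᵀ = S) (hdet : IsUnit S.det)
    (hS : S.PosSemidef) :
    Measure.map C.mulVec (Measure.pi fun _ : Fin N => gaussianReal 0 1)
      = Measure.map (CFC.sqrt S).mulVec (Measure.pi fun _ : Fin q => gaussianReal 0 1) := by
  set A := CFC.sqrt S with hA
  have hAA : A * A = S := CFC.sqrt_mul_sqrt_self S (nonneg_iff_posSemidef.mpr hS)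
  have hherm : Aᴴ = A := (nonneg_iff_posSemidef.mp (CFC.sqrt_nonneg S)).1
  have hAsymm : Aᵀ = A := by
    ext i j
    have h := congrFun (congrFun hherm i) j
    simpa [conjTranspose_apply] using h
  have hAdet : IsUnit A.det := by
    have hd : A.det * A.det = S.det := by rw [← det_mul, hAA]
    rw [isUnit_iff_ne_zero] at hdet ⊢
    intro h0
    exact hdet (by rw [← hd, h0, mul_zero])
  set Q := A⁻¹ * C with hQdef
  have hC : C = A * Q := by
    rw [hQdef, ← Matrix.mul_assoc, Matrix.mul_nonsing_inv A hAdet, Matrix.one_mul]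
  have hQQ : Q * Qᵀ = 1 := by
    rw [hQdef, transpose_mul, transpose_nonsing_inv, hAsymm]
    calc A⁻¹ * C * (Cᵀ * A⁻¹) = A⁻¹ * (C * Cᵀ) * A⁻¹ := by
          simp only [Matrix.mul_assoc]
      _ = A⁻¹ * (A * A) * A⁻¹ := by rw [hCS, hAA]
      _ = (A⁻¹ * A) * (A * A⁻¹) := by simp only [Matrix.mul_assoc]
      _ = 1 := by
          rw [Matrix.nonsing_inv_mul A hAdet, Matrix.mul_nonsing_inv A hAdet, Matrix.one_mul]
  have h1 : C.mulVec = A.mulVec ∘ Q.mulVec := by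
    funext x
    rw [Function.comp_apply, mulVec_mulVec, ← hC]
  rw [h1, ← Measure.map_map (aux_measurable_mulVec A) (aux_measurable_mulVec Q),
    aux_orthonormal_rows hq Q hQQ]

theorem aux_psd_smul {q : ℕ} (c : ℝ) (hc : 0 ≤ c) {A : Matrix (Fin q) (Fin q) ℝ}
    (hA : A.PosSemidef) : (c • A).PosSemidef := by
  exact hA.smul hc

theorem aux_psd_one {q : ℕ} : (1 : Matrix (Fin q) (Fin q) ℝ).PosSemidef := by
  exact Matrix.PosSemidef.one

theorem aux_linear_comb {n : ℕ} (v : Fin n → ℝ) (hv : ∑ j, v j ^ 2 ≠ 0) :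
    Measure.map (fun x : Fin n → ℝ => ∑ j, v j * x j)
      (Measure.pi fun _ : Fin n => gaussianReal 0 1)
      = gaussianReal 0 (Real.toNNReal (∑ j, v j ^ 2)) := by
  have hpos : 0 < ∑ j, v j ^ 2 :=
    lt_of_le_of_ne (Finset.sum_nonneg fun j _ => sq_nonneg _) (Ne.symm hv)
  have hn : 1 ≤ n := by
    by_contra h
    push_neg at h
    have : n = 0 := by omega
    subst this
    simp at hv
  set σ := Real.sqrt (∑ j, v j ^ 2) with hσ
  have hσpos : 0 < σ := Real.sqrt_pos.mpr hpos
  have hσsq : σ ^ 2 = ∑ j, v j ^ 2 := Real.sq_sqrt hpos.le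
  set C : Matrix (Fin 1) (Fin n) ℝ := Matrix.of fun _ j => v j with hC
  set S : Matrix (Fin 1) (Fin 1) ℝ := (∑ j, v j ^ 2) • 1 with hSdef
  have hCS : C * Cᵀ = S := by
    ext i i'
    have : i = i' := Subsingleton.elim i i'
    subst this
    simp [hC, hSdef, mul_apply, one_apply, pow_two]
  have hS : S.PosSemidef := aux_psd_smul _ hpos.le aux_psd_one
  have hdet : IsUnit S.det := by
    rw [hSdef, det_smul, det_one]
    simp [isUnit_iff_ne_zero, hv]
  have hsqrt : CFC.sqrt S = σ • 1 := by
    refine CFC.sqrt_unique ?_ (nonneg_iff_posSemidef.mpr (aux_psd_smul _ hσpos.le aux_psd_one))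
    rw [hSdef, ← sq, smul_pow, one_pow, hσsq]
  have hmain := aux_matrix_gaussian hn C hCS hdet hS
  have he1 : Measurable (fun y : Fin 1 → ℝ => y 0) := measurable_pi_apply 0
  have hL : Measure.map (fun y : Fin 1 → ℝ => y 0)
        (Measure.map C.mulVec (Measure.pi fun _ : Fin n => gaussianReal 0 1))
      = Measure.map (fun x : Fin n → ℝ => ∑ j, v j * x j)
        (Measure.pi fun _ : Fin n => gaussianReal 0 1) := by
    rw [Measure.map_map he1 (aux_measurable_mulVec C)]
    congr 1
  have hfu : Measure.map (fun y : Fin 1 → ℝ => y 0) (Measure.pi fun _ : Fin 1 => gaussianReal 0 1)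
      = gaussianReal 0 1 := by
    have h2 := (measurePreserving_funUnique (gaussianReal 0 1) (Fin 1)).map_eq
    convert h2
    rfl
  have hR : Measure.map (fun y : Fin 1 → ℝ => y 0)
        (Measure.map (CFC.sqrt S).mulVec (Measure.pi fun _ : Fin 1 => gaussianReal 0 1))
      = gaussianReal 0 (Real.toNNReal (∑ j, v j ^ 2)) := by
    rw [Measure.map_map he1 (aux_measurable_mulVec _)]
    have hcomp : ((fun y : Fin 1 → ℝ => y 0) ∘ (CFC.sqrt S).mulVec)
        = (σ * ·) ∘ (fun y : Fin 1 → ℝ => y 0) := by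
      funext z
      simp [hsqrt, smul_mulVec, Function.comp]
    rw [hcomp, ← Measure.map_map (measurable_const_mul σ) he1, hfu,
      gaussianReal_map_const_mul σ]
    congr 1
    · ring
    · ext
      simp [Real.coe_toNNReal _ hpos.le, ← hσsq]
      positivity
  rw [← hL, hmain, hR]

theorem aux_rank_isUnit {p : ℕ} (G : Matrix (Fin p) (Fin p) ℝ) (h : G.rank = p) :
    IsUnit G.det := by
  have hrange : LinearMap.range G.mulVecLin = ⊤ := by
    apply Submodule.eq_top_of_finrank_eq
    rw [← Matrix.rank, h]
    simp
  have hsurj : Function.Surjective G.mulVecLin := LinearMap.range_eq_top.mp hrange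
  have hinj : Function.Injective G.mulVecLin :=
    (LinearMap.injective_iff_surjective).mpr hsurj
  let e := LinearEquiv.ofBijective G.mulVecLin ⟨hinj, hsurj⟩
  have hdet : IsUnit (LinearMap.det (e : (Fin p → ℝ) →ₗ[ℝ] (Fin p → ℝ))) :=
    LinearEquiv.isUnit_det' e
  have heq : (e : (Fin p → ℝ) →ₗ[ℝ] (Fin p → ℝ)) = G.mulVecLin := rfl
  rw [heq, ← Matrix.toLin'_apply', LinearMap.det_toLin'] at hdet
  exact hdet

theorem aux_psd_zero {q : ℕ} : (0 : Matrix (Fin q) (Fin q) ℝ).PosSemidef := by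
  have := aux_psd_smul (0:ℝ) le_rfl (aux_psd_one (q := q))
  simpa using this

/-- The multivariate Gaussian `N(m, S)` on `ℝ^p`, as the pushforward of the standard
Gaussian by `z ↦ m + S^{1/2} z`, where `S^{1/2}` is the PSD square root. -/
noncomputable def mvGaussian {p : ℕ} (m : Fin p → ℝ) (S : Matrix (Fin p) (Fin p) ℝ)
    (hS : S.PosSemidef) : Measure (Fin p → ℝ) :=
  Measure.map (fun z => m + ((hS.1.eigenvectorUnitary : Matrix (Fin p) (Fin p) ℝ) *
      diagonal ((RCLike.ofReal : ℝ → ℝ) ∘ (√·) ∘ hS.1.eigenvalues) *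
      (star hS.1.eigenvectorUnitary : Matrix (Fin p) (Fin p) ℝ)).mulVec z)
    (Measure.pi fun _ : Fin p => gaussianReal 0 1)

theorem aux_sqrt_eq {q : ℕ} {S : Matrix (Fin q) (Fin q) ℝ} (hS : S.PosSemidef) :
    CFC.sqrt S = (hS.1.eigenvectorUnitary : Matrix (Fin q) (Fin q) ℝ) *
      diagonal ((RCLike.ofReal : ℝ → ℝ) ∘ (√·) ∘ hS.1.eigenvalues) *
      (star hS.1.eigenvectorUnitary : Matrix (Fin q) (Fin q) ℝ) := by
  rw [CFC.sqrt_eq_cfc, cfc_nnreal_eq_real _ S, hS.1.cfc_eq, IsHermitian.cfc, Unitary.conjStarAlgAut_apply]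
  congr 3
  funext i
  simp [Function.comp_def, Real.coe_sqrt, Real.coe_toNNReal', hS.eigenvalues_nonneg i]

/-- conditioned on `X` and `M = RX` (so that `R = MX⁺ + R'·P_{U⊥}`
with `R'` a fresh i.i.d. standard Gaussian matrix), the estimator
`β̃ = β + M⁺Re` (with `y = Xβ + e`, `e` fixed) is distributed
`N(β + X⁺e, ‖P_{U⊥}e‖²·(MᵀM)⁻¹)`, where `P_{U⊥} = I − XX⁺`. -/
theorem projected_ols_estimator_conditional_distribution
    {n p r : ℕ} (X : Matrix (Fin n) (Fin p) ℝ) (hX : X.rank = p)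
    (β : Fin p → ℝ) (e : Fin n → ℝ)
    (M : Matrix (Fin r) (Fin p) ℝ) (hM : M.rank = p)
    (Xplus : Matrix (Fin p) (Fin n) ℝ) (hXplus : Xplus = (Xᵀ * X)⁻¹ * Xᵀ)
    (Pperp : Matrix (Fin n) (Fin n) ℝ)
    (hPperp : Pperp = (1 : Matrix (Fin n) (Fin n) ℝ) - X * Xplus)
    (hS : (((∑ i : Fin n, Pperp.mulVec e i ^ 2)) • (Mᵀ * M)⁻¹).PosSemidef) :
    Measure.map
        (fun R' : Fin r → Fin n → ℝ =>
          β + ((Mᵀ * M)⁻¹ * Mᵀ).mulVec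
            ((M * Xplus + Matrix.of R' * Pperp).mulVec e))
        (Measure.pi fun _ : Fin r => Measure.pi fun _ : Fin n => gaussianReal 0 1)
      = mvGaussian (β + Xplus.mulVec e)
          ((∑ i : Fin n, Pperp.mulVec e i ^ 2) • (Mᵀ * M)⁻¹) hS := by
  set G := Mᵀ * M with hG
  set B := G⁻¹ * Mᵀ with hB
  set v := Pperp.mulVec e with hv
  set σ2 := ∑ i, v i ^ 2 with hσ2
  set m0 := β + Xplus.mulVec e with hm0
  have hGrank : G.rank = p := by rw [hG, Matrix.rank_transpose_mul_self]; exact hM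
  have hGdet : IsUnit G.det := aux_rank_isUnit G hGrank
  have hGinv : G⁻¹ * G = 1 := Matrix.nonsing_inv_mul G hGdet
  have hGinv' : G * G⁻¹ = 1 := Matrix.mul_nonsing_inv G hGdet
  have hGsymm : Gᵀ = G := by rw [hG, transpose_mul, transpose_transpose]
  have hp_r : p ≤ r := by
    have h1 : M.rank ≤ Fintype.card (Fin r) := M.rank_le_card_height
    rw [hM, Fintype.card_fin] at h1
    exact h1
  -- rewrite the map into the canonical form
  have hfun : (fun R' : Fin r → Fin n → ℝ =>
        β + B.mulVec ((M * Xplus + Matrix.of R' * Pperp).mulVec e))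
      = fun R' => m0 + B.mulVec (fun i => ∑ j, v j * R' i j) := by
    funext R'
    rw [add_mulVec, mulVec_add]
    have h2 : B.mulVec ((M * Xplus).mulVec e) = Xplus.mulVec e := by
      rw [mulVec_mulVec]
      have hBM : B * (M * Xplus) = Xplus := by
        have h3 : B * (M * Xplus) = G⁻¹ * ((Mᵀ * M) * Xplus) := by
          rw [hB]; simp only [Matrix.mul_assoc]
        rw [h3, ← hG, ← Matrix.mul_assoc, hGinv, Matrix.one_mul]
      rw [hBM]
    have h3 : (Matrix.of R' * Pperp).mulVec e = fun i => ∑ j, v j * R' i j := by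
      rw [← mulVec_mulVec, ← hv]
      funext i
      simp [mulVec, dotProduct, mul_comm]
    rw [h2, h3, hm0, add_assoc]
  rw [hfun]
  by_cases hσ : σ2 = 0
  · -- degenerate case: v = 0
    have hv0 : ∀ j, v j = 0 := by
      intro j
      have h0 := (Finset.sum_eq_zero_iff_of_nonneg
        (fun i (_ : i ∈ Finset.univ) => sq_nonneg (v i))).mp hσ j (Finset.mem_univ j)
      exact pow_eq_zero_iff two_ne_zero |>.mp h0
    have hconst : (fun R' : Fin r → Fin n → ℝ =>
        m0 + B.mulVec (fun i => ∑ j, v j * R' i j)) = fun _ => m0 := by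
      funext R'
      have h4 : (fun i : Fin r => ∑ j, v j * R' i j) = (0 : Fin r → ℝ) := by
        funext i; simp [hv0]
      rw [h4, mulVec_zero, add_zero]
    have hS0 : σ2 • G⁻¹ = 0 := by rw [hσ, zero_smul]
    have hsqrt0 : CFC.sqrt (σ2 • G⁻¹) = 0 := by
      rw [hS0, CFC.sqrt_zero]
    have hRHS : mvGaussian m0 (σ2 • G⁻¹) hS
        = Measure.map (fun _ : Fin p → ℝ => m0)
          (Measure.pi fun _ : Fin p => gaussianReal 0 1) := by
      rw [mvGaussian, ← aux_sqrt_eq hS, hsqrt0]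
      congr 1
      funext z
      rw [zero_mulVec, add_zero]
    rw [hconst, hRHS, Measure.map_const, Measure.map_const, measure_univ, measure_univ]
  · -- nondegenerate case
    have hσpos : 0 < σ2 :=
      lt_of_le_of_ne (Finset.sum_nonneg fun j _ => sq_nonneg _) (Ne.symm hσ)
    set σ := Real.sqrt σ2 with hσdef
    have hσsq : σ ^ 2 = σ2 := Real.sq_sqrt hσpos.le
    have hσpos' : 0 < σ := Real.sqrt_pos.mpr hσpos
    set t : ℝ≥0 := Real.toNNReal σ2 with ht
    have hmp1 : MeasurePreserving (fun x : Fin n → ℝ => ∑ j, v j * x j)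
        (Measure.pi fun _ : Fin n => gaussianReal 0 1) (gaussianReal 0 t) := by
      refine ⟨Finset.measurable_sum _ fun j _ => (measurable_pi_apply j).const_mul _, ?_⟩
      exact aux_linear_comb v hσ
    have hmp2 := measurePreserving_pi
      (fun _ : Fin r => Measure.pi fun _ : Fin n => gaussianReal 0 1)
      (fun _ : Fin r => gaussianReal 0 t) (fun _ => hmp1)
    have hscale1 : MeasurePreserving (fun z : ℝ => σ * z)
        (gaussianReal 0 1) (gaussianReal 0 t) := by
      refine ⟨measurable_const_mul σ, ?_⟩
      rw [gaussianReal_map_const_mul σ]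
      congr 1
      · rw [mul_zero]
      · ext
        simp [ht, Real.coe_toNNReal _ hσpos.le, ← hσsq]
        positivity
    have hscale := measurePreserving_pi (fun _ : Fin r => gaussianReal 0 1)
      (fun _ : Fin r => gaussianReal 0 t) (fun _ => hscale1)
    -- the covariance matrix
    have hBBt : B * Bᵀ = G⁻¹ := by
      have hBt : Bᵀ = M * G⁻¹ := by
        rw [hB, transpose_mul, transpose_transpose, transpose_nonsing_inv, hGsymm]
      rw [hBt]
      have h5 : B * (M * G⁻¹) = G⁻¹ * ((Mᵀ * M) * G⁻¹) := by
        rw [hB]; simp only [Matrix.mul_assoc]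
      rw [h5, ← hG, ← Matrix.mul_assoc, hGinv, Matrix.one_mul]
    have hCS : (σ • B) * (σ • B)ᵀ = σ2 • G⁻¹ := by
      rw [transpose_smul, Matrix.smul_mul, Matrix.mul_smul, smul_smul, hBBt, ← hσsq, sq]
    have hdetS : IsUnit (σ2 • G⁻¹).det := by
      rw [det_smul, isUnit_iff_ne_zero]
      have hd1 : G⁻¹.det * G.det = 1 := G.det_nonsing_inv_mul_det hGdet
      have hd2 : G⁻¹.det ≠ 0 := by
        intro h0; rw [h0, zero_mul] at hd1; exact one_ne_zero hd1.symm
      exact mul_ne_zero (pow_ne_zero _ hσ) hd2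
    have hmg := aux_matrix_gaussian hp_r (σ • B) hCS hdetS hS
    -- measurability facts
    have hmB : Measurable (fun w : Fin r → ℝ => m0 + B.mulVec w) :=
      Measurable.add measurable_const (aux_measurable_mulVec B)
    have hmadd : Measurable (fun w : Fin p → ℝ => m0 + w) :=
      Measurable.add measurable_const measurable_id
    calc Measure.map (fun R' : Fin r → Fin n → ℝ => m0 + B.mulVec fun i => ∑ j, v j * R' i j)
          (Measure.pi fun _ : Fin r => Measure.pi fun _ : Fin n => gaussianReal 0 1)
        = Measure.map ((fun w : Fin r → ℝ => m0 + B.mulVec w) ∘ (fun R' i => ∑ j, v j * R' i j))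
          (Measure.pi fun _ : Fin r => Measure.pi fun _ : Fin n => gaussianReal 0 1) := rfl
      _ = Measure.map (fun w : Fin r → ℝ => m0 + B.mulVec w)
          (Measure.map (fun (R' : Fin r → Fin n → ℝ) i => ∑ j, v j * R' i j)
            (Measure.pi fun _ : Fin r => Measure.pi fun _ : Fin n => gaussianReal 0 1)) :=
          (Measure.map_map hmB hmp2.measurable).symm
      _ = Measure.map (fun w : Fin r → ℝ => m0 + B.mulVec w)
          (Measure.pi fun _ : Fin r => gaussianReal 0 t) := by rw [hmp2.map_eq]
      _ = Measure.map (fun w : Fin r → ℝ => m0 + B.mulVec w)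
          (Measure.map (fun (z : Fin r → ℝ) i => σ * z i)
            (Measure.pi fun _ : Fin r => gaussianReal 0 1)) := by rw [hscale.map_eq]
      _ = Measure.map (fun z : Fin r → ℝ => m0 + (σ • B).mulVec z)
          (Measure.pi fun _ : Fin r => gaussianReal 0 1) := by
            rw [Measure.map_map hmB hscale.measurable]
            congr 1
            funext z
            simp only [Function.comp_apply]
            congr 1
            have hz : (fun i => σ * z i) = σ • z := rfl
            rw [hz, mulVec_smul, smul_mulVec]
      _ = Measure.map ((fun w : Fin p → ℝ => m0 + w) ∘ (σ • B).mulVec)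
          (Measure.pi fun _ : Fin r => gaussianReal 0 1) := rfl
      _ = Measure.map (fun w : Fin p → ℝ => m0 + w)
          (Measure.map (σ • B).mulVec (Measure.pi fun _ : Fin r => gaussianReal 0 1)) :=
          (Measure.map_map hmadd (aux_measurable_mulVec _)).symm
      _ = Measure.map (fun w : Fin p → ℝ => m0 + w)
          (Measure.map (CFC.sqrt (σ2 • G⁻¹)).mulVec (Measure.pi fun _ : Fin p => gaussianReal 0 1)) := by
            rw [hmg]
      _ = mvGaussian m0 (σ2 • G⁻¹) hS := by
            rw [mvGaussian, ← aux_sqrt_eq hS, Measure.map_map hmadd (aux_measurable_mulVec _)]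
            rfl
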